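/- Assume J = 2 and b_1 ≥ b_2. Let θ : K → ℝ be nonnegative, satisfy the reduced balance equations, and have total mass Σ_{k∈K} θ(k) = 1; write θ(k_1,k_2) for its values. Then for every integer ℓ_2 with 1 ≤ ℓ_2 ≤ b_2: (Σ_{k_1=0}^{b_1} θ(k_1, ℓ_2)) · λ_2 = θ(b_1 − b_2 + ℓ_2 − 1, ℓ_2 − 1) · ν/2 + (Σ_{k_1 = b_1 − b_2 + ℓ_2}^{b_1} θ(k_1, ℓ_2 − 1)) · ν. -/

import Mathlib

open Finset

/-- `k + e_i`: add one unit in coordinate `i`. -/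
def addE {J : ℕ} (k : Fin J → ℕ) (i : Fin J) : Fin J → ℕ :=
  Function.update k i (k i + 1)

/-- `k - e_i`: remove one unit in coordinate `i`. -/
def subE {J : ℕ} (k : Fin J → ℕ) (i : Fin J) : Fin J → ℕ :=
  Function.update k i (k i - 1)

/-- The set `M(k)` of locations attaining the maximal difference `b_i - k_i`. -/
def Mset {J : ℕ} (b k : Fin J → ℕ) : Finset (Fin J) :=
  Finset.univ.filter (fun i => b i - k i = Finset.univ.sup (fun j => b j - k j))

/-- Routing probability `p_i(k)` (strict load balancing policy). -/
noncomputable def routeP {J : ℕ} (b k : Fin J → ℕ) (i : Fin J) : ℝ :=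
  if i ∈ Mset b k then 1 / ((Mset b k).card : ℝ) else 0

/-- The inventory state space `K = {k : 0 ≤ k_j ≤ b_j}` as a `Finset`. -/
def Kfin {J : ℕ} (b : Fin J → ℕ) : Finset (Fin J → ℕ) :=
  Fintype.piFinset fun j => Finset.range (b j + 1)

/-- The reduced balance equation at a single state `k`. -/
def RBEat {J : ℕ} (lam : Fin J → ℝ) (b : Fin J → ℕ) (ν : ℝ)
    (θ : (Fin J → ℕ) → ℝ) (k : Fin J → ℕ) : Prop :=
  θ k * ((∑ i ∈ Finset.univ.filter (fun i => 0 < k i), lam i)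
      + ∑ i ∈ Finset.univ.filter (fun i => k i < b i), ν * routeP b k i)
    = (∑ i ∈ Finset.univ.filter (fun i => k i < b i), θ (addE k i) * lam i)
      + ∑ i ∈ Finset.univ.filter (fun i => 0 < k i),
          θ (subE k i) * ν * routeP b (subE k i) i

/-- `θ` satisfies the reduced balance equations (at every `k ∈ K`). -/
def ReducedBalance {J : ℕ} (lam : Fin J → ℝ) (b : Fin J → ℕ) (ν : ℝ)
    (θ : (Fin J → ℕ) → ℝ) : Prop :=
  ∀ k : Fin J → ℕ, (∀ j, k j ≤ b j) → RBEat lam b ν θ k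

/-- The global balance equation at a single state `(n, k)`. -/
def GBEat {J : ℕ} (lam : Fin J → ℝ) (b : Fin J → ℕ) (μ : Fin J → ℕ → ℝ) (ν : ℝ)
    (x : (Fin J → ℕ) → (Fin J → ℕ) → ℝ) (n k : Fin J → ℕ) : Prop :=
  x n k * ((∑ i ∈ Finset.univ.filter (fun i => 0 < k i), lam i)
      + (∑ i ∈ Finset.univ.filter (fun i => 0 < n i ∧ 0 < k i), μ i (n i))
      + ∑ i ∈ Finset.univ.filter (fun i => k i < b i), ν * routeP b k i)
    = (∑ i ∈ Finset.univ.filter (fun i => 0 < n i ∧ 0 < k i), x (subE n i) k * lam i)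
      + (∑ i ∈ Finset.univ.filter (fun i => k i < b i),
          x (addE n i) (addE k i) * μ i (n i + 1))
      + ∑ i ∈ Finset.univ.filter (fun i => 0 < k i),
          x n (subE k i) * ν * routeP b (subE k i) i

/-- `x` satisfies the global balance equations (at every `(n,k) ∈ ℕ^J × K`). -/
def GlobalBalance {J : ℕ} (lam : Fin J → ℝ) (b : Fin J → ℕ) (μ : Fin J → ℕ → ℝ)
    (ν : ℝ) (x : (Fin J → ℕ) → (Fin J → ℕ) → ℝ) : Prop :=
  ∀ n k : Fin J → ℕ, (∀ j, k j ≤ b j) → GBEat lam b μ ν x n k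

/-- `ξ̃_j(n) = ∏_{ℓ=1}^n λ_j / μ_j(ℓ)`. -/
noncomputable def xiT {J : ℕ} (lam : Fin J → ℝ) (μ : Fin J → ℕ → ℝ)
    (j : Fin J) (n : ℕ) : ℝ :=
  ∏ l ∈ Finset.Icc 1 n, lam j / μ j l

/-- `ξ̃(n) = ∏_j ξ̃_j(n_j)`. -/
noncomputable def xiTvec {J : ℕ} (lam : Fin J → ℝ) (μ : Fin J → ℕ → ℝ)
    (n : Fin J → ℕ) : ℝ :=
  ∏ j, xiT lam μ j (n j)

/-- The transition rates `q_red` of the reduced (inventory-replenishment) process. -/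
noncomputable def qred {J : ℕ} (lam : Fin J → ℝ) (b : Fin J → ℕ) (ν : ℝ)
    (k k' : Fin J → ℕ) : ℝ :=
  (∑ i : Fin J, (if 0 < k i ∧ k' = subE k i then lam i else 0))
    + ∑ i : Fin J, (if k i < b i ∧ k' = addE k i then ν * routeP b k i else 0)

/-- The candidate stationary measure for base stock levels all equal to one. -/
noncomputable def thetaOne {J : ℕ} (lam : Fin J → ℝ) (ν : ℝ)
    (k : Fin J → ℕ) : ℝ :=
  (∏ l ∈ Finset.range (∑ j, k j), 1 / ((J : ℝ) - (l : ℝ)))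
    * (∏ j, (1 / lam j) ^ (k j)) * (1 / ν) ^ (J - ∑ j, k j)

lemma addE0 (a c : ℕ) : addE ![a, c] 0 = ![a+1, c] := by
  funext i; fin_cases i <;> simp [addE]
lemma addE1 (a c : ℕ) : addE ![a, c] 1 = ![a, c+1] := by
  funext i; fin_cases i <;> simp [addE]
lemma subE0 (a c : ℕ) : subE ![a, c] 0 = ![a-1, c] := by
  funext i; fin_cases i <;> simp [subE]
lemma subE1 (a c : ℕ) : subE ![a, c] 1 = ![a, c-1] := by
  funext i; fin_cases i <;> simp [subE]

lemma sup_two (f : Fin 2 → ℕ) : Finset.univ.sup f = max (f 0) (f 1) := by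
  rw [show (Finset.univ : Finset (Fin 2)) = {0, 1} from rfl]
  simp [Finset.sup_insert, Finset.sup_singleton]

lemma Mset_two (b k : Fin 2 → ℕ) (i : Fin 2) :
    (i ∈ Mset b k) ↔ b i - k i = max (b 0 - k 0) (b 1 - k 1) := by
  simp [Mset, sup_two]

lemma routeP1_eq (b k : Fin 2 → ℕ) :
    routeP b k 1 = if b 0 - k 0 < b 1 - k 1 then 1
      else if b 0 - k 0 = b 1 - k 1 then 1/2 else 0 := by
  unfold routeP
  rcases Nat.lt_trichotomy (b 0 - k 0) (b 1 - k 1) with h | h | h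
  · have h1 : (1 : Fin 2) ∈ Mset b k := by rw [Mset_two]; omega
    have hM : Mset b k = {1} := by
      apply Finset.eq_singleton_iff_unique_mem.mpr
      refine ⟨h1, fun x hx => ?_⟩
      fin_cases x
      · rw [Mset_two] at hx; simp only [Fin.mk_zero, Fin.mk_one] at hx; omega
      · rfl
    simp [hM, h]
  · have hM : Mset b k = Finset.univ := by
      apply Finset.eq_univ_iff_forall.mpr
      intro x; fin_cases x <;> (rw [Mset_two]; simp only [Fin.mk_zero, Fin.mk_one]; omega)
    simp [hM, h]
  · have h1 : (1 : Fin 2) ∉ Mset b k := by rw [Mset_two]; omega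
    rw [if_neg h1, if_neg (by omega), if_neg (by omega)]

lemma rbe2 (lam : Fin 2 → ℝ) (b : Fin 2 → ℕ) (ν : ℝ) (θ : (Fin 2 → ℕ) → ℝ)
    (a c : ℕ) (h : RBEat lam b ν θ ![a, c]) :
    θ ![a, c] * (((if 0 < a then lam 0 else 0) + (if 0 < c then lam 1 else 0))
        + ((if a < b 0 then ν * routeP b ![a, c] 0 else 0)
          + (if c < b 1 then ν * routeP b ![a, c] 1 else 0)))
      = ((if a < b 0 then θ ![a+1, c] * lam 0 else 0)
          + (if c < b 1 then θ ![a, c+1] * lam 1 else 0))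
        + ((if 0 < a then θ ![a-1, c] * ν * routeP b ![a-1, c] 0 else 0)
          + (if 0 < c then θ ![a, c-1] * ν * routeP b ![a, c-1] 1 else 0)) := by
  unfold RBEat at h
  simp only [Finset.sum_filter, Fin.sum_univ_two, Matrix.cons_val_zero, Matrix.cons_val_one,
    Matrix.head_cons, addE0, addE1, subE0, subE1] at h
  convert h using 2
  rfl

lemma shift1 (n : ℕ) (f : ℕ → ℝ) :
    ∑ a ∈ Finset.range (n+1), (if 0 < a then f a else 0)
      = ∑ a ∈ Finset.range (n+1), (if a < n then f (a+1) else 0) := by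
  rw [Finset.sum_range_succ' _ n, Finset.sum_range_succ]
  rw [if_neg (lt_irrefl 0), if_neg (lt_irrefl n), add_zero, add_zero]
  exact Finset.sum_congr rfl (fun a ha => by simp [Finset.mem_range.mp ha])

lemma shift2 (n : ℕ) (f : ℕ → ℝ) :
    ∑ a ∈ Finset.range (n+1), (if a < n then f a else 0)
      = ∑ a ∈ Finset.range (n+1), (if 0 < a then f (a-1) else 0) := by
  rw [shift1 n (fun a => f (a-1))]
  simp


lemma rowbal (lam : Fin 2 → ℝ) (b : Fin 2 → ℕ) (ν : ℝ) (θ : (Fin 2 → ℕ) → ℝ)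
    (hbal : ∀ k : Fin 2 → ℕ, (∀ j, k j ≤ b j) → RBEat lam b ν θ k)
    (c : ℕ) (hc : c ≤ b 1) :
    (if 0 < c then (∑ a ∈ Finset.range (b 0 + 1), θ ![a, c]) * lam 1 else 0)
      + (if c < b 1 then ∑ a ∈ Finset.range (b 0 + 1),
            θ ![a, c] * ν * routeP b ![a, c] 1 else 0)
    = (if c < b 1 then (∑ a ∈ Finset.range (b 0 + 1), θ ![a, c+1]) * lam 1 else 0)
      + (if 0 < c then ∑ a ∈ Finset.range (b 0 + 1),
            θ ![a, c-1] * ν * routeP b ![a, c-1] 1 else 0) := by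
  set n := b 0 with hn
  have H : ∀ a ∈ Finset.range (n+1),
      ((if 0 < a then θ ![a, c] * lam 0 else 0)
        + (if 0 < c then θ ![a, c] * lam 1 else 0))
        + ((if a < n then θ ![a, c] * ν * routeP b ![a, c] 0 else 0)
          + (if c < b 1 then θ ![a, c] * ν * routeP b ![a, c] 1 else 0))
      = ((if a < n then θ ![a+1, c] * lam 0 else 0)
          + (if c < b 1 then θ ![a, c+1] * lam 1 else 0))
        + ((if 0 < a then θ ![a-1, c] * ν * routeP b ![a-1, c] 0 else 0)
          + (if 0 < c then θ ![a, c-1] * ν * routeP b ![a, c-1] 1 else 0)) := by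
    intro a ha
    have ha' : a ≤ n := Nat.lt_succ_iff.mp (Finset.mem_range.mp ha)
    have h := rbe2 lam b ν θ a c (hbal ![a, c] (by
      intro j; fin_cases j <;> simpa using by first | exact ha' | exact hc))
    simp only [mul_add, mul_ite, mul_zero, ← mul_assoc] at h
    exact h
  have Hsum := Finset.sum_congr rfl H
  rw [Finset.sum_add_distrib, Finset.sum_add_distrib, Finset.sum_add_distrib,
      Finset.sum_add_distrib, Finset.sum_add_distrib, Finset.sum_add_distrib] at Hsum
  have c1 : ∑ a ∈ Finset.range (n+1), (if 0 < a then θ ![a, c] * lam 0 else 0)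
      = ∑ a ∈ Finset.range (n+1), (if a < n then θ ![a+1, c] * lam 0 else 0) :=
    shift1 n (fun a => θ ![a, c] * lam 0)
  have c2 : ∑ a ∈ Finset.range (n+1),
        (if a < n then θ ![a, c] * ν * routeP b ![a, c] 0 else 0)
      = ∑ a ∈ Finset.range (n+1),
          (if 0 < a then θ ![a-1, c] * ν * routeP b ![a-1, c] 0 else 0) :=
    shift2 n (fun a => θ ![a, c] * ν * routeP b ![a, c] 0)
  have key : ∑ a ∈ Finset.range (n+1), (if 0 < c then θ ![a, c] * lam 1 else 0)
      + ∑ a ∈ Finset.range (n+1),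
          (if c < b 1 then θ ![a, c] * ν * routeP b ![a, c] 1 else 0)
      = ∑ a ∈ Finset.range (n+1), (if c < b 1 then θ ![a, c+1] * lam 1 else 0)
      + ∑ a ∈ Finset.range (n+1),
          (if 0 < c then θ ![a, c-1] * ν * routeP b ![a, c-1] 1 else 0) := by
    linarith [Hsum, c1, c2]
  by_cases h0 : 0 < c <;> by_cases h1 : c < b 1 <;>
    simp only [h0, h1, if_true, if_false, ite_true, ite_false,
      Finset.sum_const_zero, Finset.sum_mul] at key ⊢ <;>
    linarith [key]

lemma cutbal (lam : Fin 2 → ℝ) (b : Fin 2 → ℕ) (ν : ℝ) (θ : (Fin 2 → ℕ) → ℝ)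
    (hbal : ∀ k : Fin 2 → ℕ, (∀ j, k j ≤ b j) → RBEat lam b ν θ k) :
    ∀ m ℓ : ℕ, 1 ≤ ℓ → ℓ + m = b 1 →
      (∑ a ∈ Finset.range (b 0 + 1), θ ![a, ℓ]) * lam 1
        = ∑ a ∈ Finset.range (b 0 + 1), θ ![a, ℓ-1] * ν * routeP b ![a, ℓ-1] 1 := by
  intro m
  induction m with
  | zero =>
    intro ℓ h1 h2
    have hrb := rowbal lam b ν θ hbal ℓ (by omega)
    rw [if_pos (by omega : 0 < ℓ), if_neg (by omega : ¬ ℓ < b 1),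
        if_neg (by omega : ¬ ℓ < b 1), if_pos (by omega : 0 < ℓ),
        add_zero, zero_add] at hrb
    exact hrb
  | succ m ih =>
    intro ℓ h1 h2
    have hlt : ℓ < b 1 := by omega
    have hrb := rowbal lam b ν θ hbal ℓ (by omega)
    rw [if_pos (by omega : 0 < ℓ), if_pos hlt, if_pos hlt,
        if_pos (by omega : 0 < ℓ)] at hrb
    have hih := ih (ℓ+1) (by omega) (by omega)
    simp only [Nat.add_sub_cancel] at hih
    linarith

lemma Ueval (b : Fin 2 → ℕ) (ν : ℝ) (θ : (Fin 2 → ℕ) → ℝ)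
    (ℓ₂ : ℕ) (h1 : 1 ≤ ℓ₂) (h2 : ℓ₂ ≤ b 1) (hb12 : b 1 ≤ b 0) :
    ∑ a ∈ Finset.range (b 0 + 1), θ ![a, ℓ₂-1] * ν * routeP b ![a, ℓ₂-1] 1
      = θ ![b 0 - b 1 + ℓ₂ - 1, ℓ₂ - 1] * (ν / 2)
        + (∑ a ∈ Finset.Icc (b 0 - b 1 + ℓ₂) (b 0), θ ![a, ℓ₂-1]) * ν := by
  set t := b 0 - b 1 + ℓ₂ with ht
  have step : ∀ a ∈ Finset.range (b 0 + 1),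
      θ ![a, ℓ₂-1] * ν * routeP b ![a, ℓ₂-1] 1
        = (if a = t - 1 then θ ![a, ℓ₂-1] * (ν/2) else 0)
          + (if t ≤ a then θ ![a, ℓ₂-1] * ν else 0) := by
    intro a ha
    have ha' : a ≤ b 0 := Nat.lt_succ_iff.mp (Finset.mem_range.mp ha)
    rw [routeP1_eq]
    rw [show (![a, ℓ₂-1] : Fin 2 → ℕ) 0 = a from rfl, show (![a, ℓ₂-1] : Fin 2 → ℕ) 1 = ℓ₂-1 from rfl]
    by_cases hge : t ≤ a
    · rw [if_pos (by omega), if_neg (by omega), if_pos hge]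
      ring
    · by_cases heq : a = t - 1
      · rw [if_neg (by omega), if_pos (by omega), if_pos heq, if_neg (by omega)]
        ring
      · rw [if_neg (by omega), if_neg (by omega), if_neg heq, if_neg hge]
        ring
  rw [Finset.sum_congr rfl step, Finset.sum_add_distrib]
  congr 1
  · rw [Finset.sum_ite_eq' (Finset.range (b 0 + 1)) (t-1) (fun a => θ ![a, ℓ₂-1] * (ν/2))]
    rw [if_pos (by simp [Finset.mem_range]; omega)]
  · rw [← Finset.sum_filter, Finset.sum_mul]
    apply Finset.sum_congr
    · ext x; simp [Finset.mem_range, Finset.mem_Icc]; omega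
    · intros; rfl


/-- two heterogeneous locations, cut balance for the second
inventory, `1 ≤ ℓ₂ ≤ b₂`. -/
theorem two_locations_marginal_Y2
    (lam : Fin 2 → ℝ) (hlam : ∀ j, 0 < lam j)
    (b : Fin 2 → ℕ) (hb : ∀ j, 1 ≤ b j) (hb12 : b 1 ≤ b 0)
    (ν : ℝ) (hν : 0 < ν)
    (θ : (Fin 2 → ℕ) → ℝ)
    (hθnn : ∀ k : Fin 2 → ℕ, (∀ j, k j ≤ b j) → 0 ≤ θ k)
    (hbal : ReducedBalance lam b ν θ)
    (hmass : ∑ k ∈ Kfin b, θ k = 1) :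
    ∀ ℓ₂ : ℕ, 1 ≤ ℓ₂ → ℓ₂ ≤ b 1 →
      (∑ k₁ ∈ Finset.range (b 0 + 1), θ ![k₁, ℓ₂]) * lam 1
        = θ ![b 0 - b 1 + ℓ₂ - 1, ℓ₂ - 1] * (ν / 2)
          + (∑ k₁ ∈ Finset.Icc (b 0 - b 1 + ℓ₂) (b 0), θ ![k₁, ℓ₂ - 1]) * ν := by
  intro ℓ₂ h1 h2
  have hc := cutbal lam b ν θ hbal (b 1 - ℓ₂) ℓ₂ h1 (by omega)
  rw [hc, Ueval b ν θ ℓ₂ h1 h2 hb12]
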